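/- In the 3m-voter profile R over A = {a_1,...,a_m} (m ≥ 3) where for each i there are two voters ranking a_i strictly below all other alternatives (indifferent among the rest) and one voter ranking a_{i+1} (indices mod m) strictly below a_i, which in turn is strictly below all other alternatives (indifferent among the rest), no alternative is a Condorcet winner; moreover, if voters 3 and 4 (the two voters ranking a_1 last among those associated with a_1) both lift a_1 to the top of their rankings, then a_1 becomes the Condorcet winner. -/

import Mathlib

open scoped Classical

variable {U : Type*}

/-- A relation is complete (total). -/
def Complete (R : U → U → Prop) : Prop := ∀ a b : U, R a b ∨ R b a

/-- Strict part of a preference relation. -/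
def StrictPref (R : U → U → Prop) (a b : U) : Prop := R a b ∧ ¬ R b a

/-- Indifference part of a preference relation. -/
def Indiff (R : U → U → Prop) (a b : U) : Prop := R a b ∧ R b a

/-- Kelly's weak set extension: every element of `X` is weakly preferred to every element of `Y`. -/
def KellyR (R : U → U → Prop) (X Y : Finset U) : Prop := ∀ x ∈ X, ∀ y ∈ Y, R x y

/-- Kelly's strict set extension. -/
def KellyP (R : U → U → Prop) (X Y : Finset U) : Prop :=
  KellyR R X Y ∧ ∃ x ∈ X, ∃ y ∈ Y, StrictPref R x y

/-- A social choice function: for any number of voters, maps a preference profile and a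
feasible set to a nonempty subset of it, depending only on preferences restricted to it. -/
structure SCF (U : Type*) where
  choice : ∀ n : ℕ, (Fin n → U → U → Prop) → Finset U → Finset U
  choice_subset : ∀ n R A, choice n R A ⊆ A
  choice_nonempty : ∀ n (R : Fin n → U → U → Prop) (A : Finset U),
    A.Nonempty → (choice n R A).Nonempty
  iia : ∀ n (R R' : Fin n → U → U → Prop) (A : Finset U),
    (∀ i, ∀ a ∈ A, ∀ b ∈ A, R i a b ↔ R' i a b) → choice n R A = choice n R' A

/-- `R'` is obtained from `R` by weakly strengthening `a` against `b`:
either `R' = R`, or `R' = R ∪ {(a,b)}`, or `R' = (R \ {(b,a)}) ∪ {(a,b)}`. -/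
def weaklyStrengthens (R R' : U → U → Prop) (a b : U) : Prop :=
  (∀ x y, R' x y ↔ R x y) ∨
  (∀ x y, R' x y ↔ (R x y ∨ (x = a ∧ y = b))) ∨
  (∀ x y, R' x y ↔ ((R x y ∧ ¬(x = b ∧ y = a)) ∨ (x = a ∧ y = b)))

/-- Set-monotonicity: the choice set is invariant under weakening unchosen alternatives. -/
def SetMonotone (f : SCF U) : Prop :=
  ∀ (n : ℕ) (R R' : Fin n → U → U → Prop) (A : Finset U) (i : Fin n) (a b : U),
    (∀ j, Complete (R j)) → (∀ j, Complete (R' j)) → A.Nonempty →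
    a ∈ A → b ∈ A → b ∉ f.choice n R A →
    (∀ j, j ≠ i → R' j = R j) →
    weaklyStrengthens (R i) (R' i) a b →
    f.choice n R' A = f.choice n R A

/-- Strong monotonicity (Maskin-style). -/
def StrongMonotone (f : SCF U) : Prop :=
  ∀ (n : ℕ) (R R' : Fin n → U → U → Prop) (A : Finset U) (i : Fin n) (a b x : U),
    (∀ j, Complete (R j)) → (∀ j, Complete (R' j)) → A.Nonempty →
    a ∈ A → b ∈ A → b ≠ x → x ∈ f.choice n R A →
    (∀ j, j ≠ i → R' j = R j) →
    weaklyStrengthens (R i) (R' i) a b →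
    x ∈ f.choice n R' A

/-- Monotonicity: a chosen alternative stays chosen when it is weakly strengthened. -/
def MonotoneSCF (f : SCF U) : Prop :=
  ∀ (n : ℕ) (R R' : Fin n → U → U → Prop) (A : Finset U) (i : Fin n) (a b : U),
    (∀ j, Complete (R j)) → (∀ j, Complete (R' j)) → A.Nonempty →
    a ∈ A → b ∈ A → a ∈ f.choice n R A →
    (∀ j, j ≠ i → R' j = R j) →
    weaklyStrengthens (R i) (R' i) a b →
    a ∈ f.choice n R' A

/-- Independence of unchosen alternatives. -/
def IUA (f : SCF U) : Prop :=
  ∀ (n : ℕ) (R R' : Fin n → U → U → Prop) (A : Finset U),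
    (∀ j, Complete (R j)) → (∀ j, Complete (R' j)) → A.Nonempty →
    (∀ i : Fin n, ∀ a ∈ f.choice n R A, ∀ b ∈ A,
      (R i a b ↔ R' i a b) ∧ (R i b a ↔ R' i b a)) →
    f.choice n R' A = f.choice n R A

/-- Strong superset property: choice sets are invariant under removal of unchosen alternatives. -/
def SSP (f : SCF U) : Prop :=
  ∀ (n : ℕ) (R : Fin n → U → U → Prop) (A B : Finset U),
    (∀ j, Complete (R j)) → A.Nonempty →
    f.choice n R A ⊆ B → B ⊆ A →
    f.choice n R B = f.choice n R A

/-- Weak R̂-group-strategyproofness: no group can obtain a Kelly-weakly-preferred different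
choice set by misreporting only their strict preferences. -/
def WeakKellyGroupSP (f : SCF U) : Prop :=
  ¬ ∃ (n : ℕ) (R R' : Fin n → U → U → Prop) (A : Finset U) (G : Finset (Fin n)),
    (∀ j, Complete (R j)) ∧ (∀ j, Complete (R' j)) ∧ A.Nonempty ∧
    (∀ i, i ∉ G → R' i = R i) ∧
    (∀ i ∈ G, ∀ a b : U, Indiff (R i) a b → Indiff (R' i) a b) ∧
    f.choice n R' A ≠ f.choice n R A ∧
    (∀ i ∈ G, KellyR (R i) (f.choice n R' A) (f.choice n R A))

/-- Weak R̂-strategyproofness (single manipulator misreporting only strict preferences). -/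
def WeakKellySP (f : SCF U) : Prop :=
  ¬ ∃ (n : ℕ) (R R' : Fin n → U → U → Prop) (A : Finset U) (i : Fin n),
    (∀ j, Complete (R j)) ∧ (∀ j, Complete (R' j)) ∧ A.Nonempty ∧
    (∀ j, j ≠ i → R' j = R j) ∧
    (∀ a b : U, Indiff (R i) a b → Indiff (R' i) a b) ∧
    f.choice n R' A ≠ f.choice n R A ∧
    KellyR (R i) (f.choice n R' A) (f.choice n R A)

/-- Weak P̂-strategyproofness (single manipulator misreporting only strict preferences). -/
def WeakKellyPSP (f : SCF U) : Prop :=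
  ¬ ∃ (n : ℕ) (R R' : Fin n → U → U → Prop) (A : Finset U) (i : Fin n),
    (∀ j, Complete (R j)) ∧ (∀ j, Complete (R' j)) ∧ A.Nonempty ∧
    (∀ j, j ≠ i → R' j = R j) ∧
    (∀ a b : U, Indiff (R i) a b → Indiff (R' i) a b) ∧
    f.choice n R' A ≠ f.choice n R A ∧
    KellyP (R i) (f.choice n R' A) (f.choice n R A)

/-- Net majority margin of `a` against `b`. -/
noncomputable def margin {n : ℕ} (R : Fin n → U → U → Prop) (a b : U) : ℤ :=
  ((Finset.univ.filter fun i => StrictPref (R i) a b).card : ℤ) -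
  ((Finset.univ.filter fun i => StrictPref (R i) b a).card : ℤ)

/-- A pairwise SCF: the outcome depends only on the net pairwise majority margins. -/
def PairwiseSCF (f : SCF U) : Prop :=
  ∀ (n m : ℕ) (R : Fin n → U → U → Prop) (R' : Fin m → U → U → Prop) (A : Finset U),
    (∀ j, Complete (R j)) → (∀ j, Complete (R' j)) →
    (∀ a ∈ A, ∀ b ∈ A, margin R a b = margin R' a b) →
    f.choice n R A = f.choice m R' A

/-- Condorcet winner: beats every other feasible alternative in pairwise majority comparisons. -/
def CondorcetWinner {V : Type*} [Fintype V] (R : V → U → U → Prop) (A : Finset U)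
    (c : U) : Prop :=
  c ∈ A ∧ ∀ b ∈ A, b ≠ c →
    (Finset.univ.filter fun i => R i c b).card > (Finset.univ.filter fun i => R i b c).card

/-- A Condorcet extension uniquely selects the Condorcet winner whenever one exists. -/
def CondorcetExtension (f : SCF U) : Prop :=
  ∀ (n : ℕ) (R : Fin n → U → U → Prop) (A : Finset U) (c : U),
    (∀ j, Complete (R j)) → CondorcetWinner R A c → f.choice n R A = {c}

/-- A resolute SCF always chooses a single alternative. -/
def Resolute (f : SCF U) : Prop :=
  ∀ (n : ℕ) (R : Fin n → U → U → Prop) (A : Finset U),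
    (∀ j, Complete (R j)) → A.Nonempty → (f.choice n R A).card = 1


lemma fin_one_ne_zero' (m : ℕ) [NeZero m] (hm : 3 ≤ m) : (1 : Fin m) ≠ 0 := by
  intro h
  have := congrArg Fin.val h
  simp [Fin.val_one'] at this
  omega

lemma fin_sub_iff {m : ℕ} [NeZero m] (j k : Fin m) : k = j - 1 ↔ j = k + 1 := by
  constructor
  · rintro rfl; rw [sub_add_cancel]
  · rintro rfl; rw [add_sub_cancel_right]

lemma fin_self_ne_sub_one {m : ℕ} [NeZero m] (hm : 3 ≤ m) (j : Fin m) : j ≠ j - 1 := by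
  intro h
  have : j = j + 1 := (fin_sub_iff j j).mp h
  exact fin_one_ne_zero' m hm (left_eq_add.mp this)

lemma charR {U : Type*} (m : ℕ) [NeZero m] (hm : 3 ≤ m)
    (a : Fin m → U) (ha : Function.Injective a)
    (rk : Fin m → U → ℕ)
    (hrk : ∀ k x, rk k x = if x = a (k + 1) then 2 else if x = a k then 1 else 0)
    (R : Fin m × Fin 3 → U → U → Prop)
    (hR2 : ∀ k : Fin m, R (k, 2) = fun x y => rk k x ≤ rk k y)
    (hR01 : ∀ (k : Fin m) (t : Fin 3), t ≠ 2 → R (k, t) = fun x y => ¬(x = a k ∧ y ≠ a k))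
    (j l : Fin m) (hjl : j ≠ l) (k : Fin m) (t : Fin 3) :
    ¬ R (k, t) (a j) (a l) ↔
      ((¬ t = 2 ∧ j = k) ∨ (t = 2 ∧ (j = k + 1 ∨ (j = k ∧ ¬ l = j + 1)))) := by
  by_cases ht : t = 2
  · subst ht
    rw [hR2]
    show ¬ (rk k (a j) ≤ rk k (a l)) ↔ _
    rw [hrk k (a j), hrk k (a l)]
    simp only [ha.eq_iff, not_true, false_and, false_or, true_and]
    split_ifs with h1 h2 h3 h4 h5 h6 <;> simp_all <;> omega
  · rw [hR01 k t ht, not_not]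
    simp only [ht, not_false_iff, true_and, false_and, or_false]
    simp only [ha.eq_iff, ne_eq]
    constructor
    · rintro ⟨h, _⟩; exact h
    · intro h; exact ⟨h, fun hl => hjl (by rw [h, hl])⟩

lemma fin3_ne2 : ∀ t : Fin 3, (¬ t = 2 ↔ (t = 0 ∨ t = 1)) := by decide

set_option maxHeartbeats 1000000 in
lemma countR {U : Type*} (m : ℕ) [NeZero m] (hm : 3 ≤ m)
    (a : Fin m → U) (ha : Function.Injective a)
    (rk : Fin m → U → ℕ)
    (hrk : ∀ k x, rk k x = if x = a (k + 1) then 2 else if x = a k then 1 else 0)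
    (R : Fin m × Fin 3 → U → U → Prop)
    (hR2 : ∀ k : Fin m, R (k, 2) = fun x y => rk k x ≤ rk k y)
    (hR01 : ∀ (k : Fin m) (t : Fin 3), t ≠ 2 → R (k, t) = fun x y => ¬(x = a k ∧ y ≠ a k))
    (j l : Fin m) (hjl : j ≠ l) :
    (Finset.univ.filter fun i : Fin m × Fin 3 => R i (a j) (a l)).card
      = if l = j + 1 then 3 * m - 3 else 3 * m - 4 := by
  have hcompl : (Finset.univ.filter fun i : Fin m × Fin 3 => R i (a j) (a l)).card
      + (Finset.univ.filter fun i : Fin m × Fin 3 => ¬ R i (a j) (a l)).card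
      = (Finset.univ : Finset (Fin m × Fin 3)).card :=
    Finset.card_filter_add_card_filter_not _
  have huniv : (Finset.univ : Finset (Fin m × Fin 3)).card = 3 * m := by
    simp [mul_comm]
  have hm9 : 9 ≤ 3 * m := by omega
  by_cases hl : l = j + 1
  · have hneg : (Finset.univ.filter fun i : Fin m × Fin 3 => ¬ R i (a j) (a l))
        = ({(j, 0), (j, 1), (j - 1, 2)} : Finset (Fin m × Fin 3)) := by
      ext ⟨k, t⟩
      simp only [Finset.mem_filter, Finset.mem_univ, true_and,
        charR m hm a ha rk hrk R hR2 hR01 j l hjl k t,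
        Finset.mem_insert, Finset.mem_singleton, Prod.mk.injEq]
      rw [fin3_ne2 t, show (j = k + 1) ↔ (k = j - 1) from (fin_sub_iff j k).symm]
      simp [hl]
      tauto
    have hnc : (Finset.univ.filter fun i : Fin m × Fin 3 => ¬ R i (a j) (a l)).card = 3 := by
      rw [hneg,
        Finset.card_insert_of_notMem (by simp [Prod.ext_iff]),
        Finset.card_insert_of_notMem (by simp [Prod.ext_iff]),
        Finset.card_singleton]
    rw [if_pos hl]
    omega
  · have hneg : (Finset.univ.filter fun i : Fin m × Fin 3 => ¬ R i (a j) (a l))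
        = ({(j, 0), (j, 1), (j, 2), (j - 1, 2)} : Finset (Fin m × Fin 3)) := by
      ext ⟨k, t⟩
      simp only [Finset.mem_filter, Finset.mem_univ, true_and,
        charR m hm a ha rk hrk R hR2 hR01 j l hjl k t,
        Finset.mem_insert, Finset.mem_singleton, Prod.mk.injEq]
      rw [fin3_ne2 t, show (j = k + 1) ↔ (k = j - 1) from (fin_sub_iff j k).symm]
      simp [hl]
      tauto
    have hnc : (Finset.univ.filter fun i : Fin m × Fin 3 => ¬ R i (a j) (a l)).card = 4 := by
      rw [hneg,
        Finset.card_insert_of_notMem (by simp [Prod.ext_iff]),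
        Finset.card_insert_of_notMem (by simp [Prod.ext_iff]),
        Finset.card_insert_of_notMem (by simp [Prod.ext_iff, fin_self_ne_sub_one hm j]),
        Finset.card_singleton]
    rw [if_neg hl]
    omega

lemma fin_two_ne_zero' (m : ℕ) [NeZero m] (hm : 3 ≤ m) : ((1:Fin m) + 1) ≠ 0 := by
  intro h
  have := congrArg Fin.val h
  rw [Fin.val_add, Fin.val_one', Fin.val_zero,
    Nat.mod_eq_of_lt (show 1 < m by omega)] at this
  rw [Nat.mod_eq_of_lt (show 1 + 1 < m by omega)] at this
  omega

section Rprime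
variable {U : Type*} (m : ℕ) [NeZero m] (hm : 3 ≤ m)
    (a : Fin m → U) (ha : Function.Injective a)
    (rk : Fin m → U → ℕ)
    (hrk : ∀ k x, rk k x = if x = a (k + 1) then 2 else if x = a k then 1 else 0)
    (R : Fin m × Fin 3 → U → U → Prop)
    (hR2 : ∀ k : Fin m, R (k, 2) = fun x y => rk k x ≤ rk k y)
    (hR01 : ∀ (k : Fin m) (t : Fin 3), t ≠ 2 → R (k, t) = fun x y => ¬(x = a k ∧ y ≠ a k))
    (R' : Fin m × Fin 3 → U → U → Prop)
    (hR'lift : ∀ t : Fin 3, t ≠ 2 → R' (0, t) = fun x y => ¬(y = a 0 ∧ x ≠ a 0))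
    (hR'rest : ∀ v : Fin m × Fin 3, ¬(v.1 = 0 ∧ v.2 ≠ 2) → R' v = R v)

include hm ha hrk hR2 hR01 hR'lift hR'rest in
lemma charR'0l (l : Fin m) (hl : l ≠ 0) (k : Fin m) (t : Fin 3) :
    ¬ R' (k, t) (a 0) (a l) ↔ (t = 2 ∧ ((0 : Fin m) = k + 1 ∨ (0 = k ∧ ¬ l = 1))) := by
  have h0l : (0 : Fin m) ≠ l := fun h => hl h.symm
  by_cases ht : t = 2
  · subst ht
    rw [hR'rest (k, 2) (by simp), hR2]
    show ¬ (rk k (a 0) ≤ rk k (a l)) ↔ _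
    rw [hrk k (a 0), hrk k (a l)]
    simp only [ha.eq_iff, true_and]
    by_cases h1 : (0 : Fin m) = k + 1
    · by_cases h3 : l = k + 1
      · exact absurd (h3.trans h1.symm) hl
      · rw [if_pos h1, if_neg h3]
        constructor
        · intro _; exact Or.inl h1
        · intro _; split_ifs <;> omega
    · by_cases h2 : (0 : Fin m) = k
      · by_cases h3 : l = k + 1
        · have hl1 : l = 1 := by rw [h3, ← h2, zero_add]
          rw [if_neg h1, if_pos h2, if_pos h3]
          simp [h1, hl1]
        · by_cases h4 : l = k
          · exact absurd (h4.trans h2.symm) hl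
          · rw [if_neg h1, if_pos h2, if_neg h3, if_neg h4]
            have hln1 : ¬ l = 1 := fun h => h3 (by rw [h, ← h2, zero_add])
            simp [h1, h2, hln1]
      · rw [if_neg h1, if_neg h2]
        simp [h1, h2]
  · by_cases hk : k = 0
    · subst hk
      rw [hR'lift t ht]
      show ¬ ¬ (a l = a 0 ∧ ¬ a 0 = a 0) ↔ _
      simp [ht]
    · rw [hR'rest (k, t) (by simp [hk]), hR01 k t ht, not_not]
      simp [ha.eq_iff, ht, Ne.symm hk]

include hm ha hrk hR2 hR01 hR'lift hR'rest in
lemma charR'l0 (l : Fin m) (hl : l ≠ 0) (k : Fin m) (t : Fin 3) :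
    ¬ R' (k, t) (a l) (a 0) ↔
      ((¬ t = 2 ∧ (k = 0 ∨ l = k)) ∨
        (t = 2 ∧ (l = k + 1 ∨ (l = k ∧ ¬ (0 : Fin m) = l + 1)))) := by
  by_cases ht : t = 2
  · subst ht
    rw [hR'rest (k, 2) (by simp)]
    rw [charR m hm a ha rk hrk R hR2 hR01 l 0 hl k 2]
    simp
  · by_cases hk : k = 0
    · subst hk
      rw [hR'lift t ht]
      show ¬ ¬ (a 0 = a 0 ∧ ¬ a l = a 0) ↔ _
      simp [ht, ha.eq_iff, hl]
    · rw [hR'rest (k, t) (by simp [hk]), hR01 k t ht, not_not]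
      simp only [ha.eq_iff, ne_eq, ht, not_false_iff, true_and, false_and, or_false]
      constructor
      · rintro ⟨h, _⟩; exact Or.inr h
      · rintro (h | h)
        · exact absurd h hk
        · exact ⟨h, fun h0 => hl (by rw [h, h0])⟩

end Rprime

section Rcount
variable {U : Type*} (m : ℕ) [NeZero m] (hm : 3 ≤ m)
    (a : Fin m → U) (ha : Function.Injective a)
    (rk : Fin m → U → ℕ)
    (hrk : ∀ k x, rk k x = if x = a (k + 1) then 2 else if x = a k then 1 else 0)
    (R : Fin m × Fin 3 → U → U → Prop)
    (hR2 : ∀ k : Fin m, R (k, 2) = fun x y => rk k x ≤ rk k y)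
    (hR01 : ∀ (k : Fin m) (t : Fin 3), t ≠ 2 → R (k, t) = fun x y => ¬(x = a k ∧ y ≠ a k))
    (R' : Fin m × Fin 3 → U → U → Prop)
    (hR'lift : ∀ t : Fin 3, t ≠ 2 → R' (0, t) = fun x y => ¬(y = a 0 ∧ x ≠ a 0))
    (hR'rest : ∀ v : Fin m × Fin 3, ¬(v.1 = 0 ∧ v.2 ≠ 2) → R' v = R v)

set_option maxHeartbeats 1000000

include hm ha hrk hR2 hR01 hR'lift hR'rest in
lemma countR'0l (l : Fin m) (hl : l ≠ 0) :
    (Finset.univ.filter fun i : Fin m × Fin 3 => R' i (a 0) (a l)).card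
      = if l = 1 then 3 * m - 1 else 3 * m - 2 := by
  have hcompl : (Finset.univ.filter fun i : Fin m × Fin 3 => R' i (a 0) (a l)).card
      + (Finset.univ.filter fun i : Fin m × Fin 3 => ¬ R' i (a 0) (a l)).card
      = (Finset.univ : Finset (Fin m × Fin 3)).card :=
    Finset.card_filter_add_card_filter_not _
  have huniv : (Finset.univ : Finset (Fin m × Fin 3)).card = 3 * m := by
    simp [mul_comm]
  have hm9 : 9 ≤ 3 * m := by omega
  by_cases hl1 : l = 1
  · have hneg : (Finset.univ.filter fun i : Fin m × Fin 3 => ¬ R' i (a 0) (a l))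
        = ({((0 : Fin m) - 1, 2)} : Finset (Fin m × Fin 3)) := by
      ext ⟨k, t⟩
      simp only [Finset.mem_filter, Finset.mem_univ, true_and,
        charR'0l m hm a ha rk hrk R hR2 hR01 R' hR'lift hR'rest l hl k t,
        Finset.mem_singleton, Prod.mk.injEq]
      rw [show ((0 : Fin m) = k + 1) ↔ (k = 0 - 1) from (fin_sub_iff 0 k).symm]
      simp [hl1]
      tauto
    rw [if_pos hl1]
    have hnc : (Finset.univ.filter fun i : Fin m × Fin 3 => ¬ R' i (a 0) (a l)).card = 1 := by
      rw [hneg, Finset.card_singleton]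
    omega
  · have hneg : (Finset.univ.filter fun i : Fin m × Fin 3 => ¬ R' i (a 0) (a l))
        = ({((0 : Fin m) - 1, 2), (0, 2)} : Finset (Fin m × Fin 3)) := by
      ext ⟨k, t⟩
      simp only [Finset.mem_filter, Finset.mem_univ, true_and,
        charR'0l m hm a ha rk hrk R hR2 hR01 R' hR'lift hR'rest l hl k t,
        Finset.mem_insert, Finset.mem_singleton, Prod.mk.injEq]
      rw [show ((0 : Fin m) = k + 1) ↔ (k = 0 - 1) from (fin_sub_iff 0 k).symm]
      simp [hl1, eq_comm (a := k) (b := (0 : Fin m))]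
      tauto
    rw [if_neg hl1]
    have hnc : (Finset.univ.filter fun i : Fin m × Fin 3 => ¬ R' i (a 0) (a l)).card = 2 := by
      rw [hneg,
        Finset.card_insert_of_notMem (by
          simp [Prod.ext_iff, (fin_self_ne_sub_one hm 0).symm]
          omega),
        Finset.card_singleton]
    omega

include hm ha hrk hR2 hR01 hR'lift hR'rest in
lemma countR'l0 (l : Fin m) (hl : l ≠ 0) :
    (Finset.univ.filter fun i : Fin m × Fin 3 => R' i (a l) (a 0)).card
      = if (0 : Fin m) = l + 1 then 3 * m - 5 else 3 * m - 6 := by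
  have hcompl : (Finset.univ.filter fun i : Fin m × Fin 3 => R' i (a l) (a 0)).card
      + (Finset.univ.filter fun i : Fin m × Fin 3 => ¬ R' i (a l) (a 0)).card
      = (Finset.univ : Finset (Fin m × Fin 3)).card :=
    Finset.card_filter_add_card_filter_not _
  have huniv : (Finset.univ : Finset (Fin m × Fin 3)).card = 3 * m := by
    simp [mul_comm]
  have hm9 : 9 ≤ 3 * m := by omega
  by_cases h0 : (0 : Fin m) = l + 1
  · have hneg : (Finset.univ.filter fun i : Fin m × Fin 3 => ¬ R' i (a l) (a 0))
        = ({((0 : Fin m), 0), (0, 1), (l, 0), (l, 1), (l - 1, 2)} : Finset (Fin m × Fin 3)) := by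
      ext ⟨k, t⟩
      simp only [Finset.mem_filter, Finset.mem_univ, true_and,
        charR'l0 m hm a ha rk hrk R hR2 hR01 R' hR'lift hR'rest l hl k t,
        Finset.mem_insert, Finset.mem_singleton, Prod.mk.injEq]
      rw [fin3_ne2 t, show (l = k + 1) ↔ (k = l - 1) from (fin_sub_iff l k).symm]
      simp [h0, eq_comm (a := l) (b := k)]
      tauto
    rw [if_pos h0]
    have hnc : (Finset.univ.filter fun i : Fin m × Fin 3 => ¬ R' i (a l) (a 0)).card = 5 := by
      rw [hneg,
        Finset.card_insert_of_notMem (by simp [Prod.ext_iff, Ne.symm hl]),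
        Finset.card_insert_of_notMem (by simp [Prod.ext_iff, Ne.symm hl]),
        Finset.card_insert_of_notMem (by simp [Prod.ext_iff]),
        Finset.card_insert_of_notMem (by simp [Prod.ext_iff]),
        Finset.card_singleton]
    omega
  · have hneg : (Finset.univ.filter fun i : Fin m × Fin 3 => ¬ R' i (a l) (a 0))
        = ({((0 : Fin m), 0), (0, 1), (l, 0), (l, 1), (l, 2), (l - 1, 2)} :
            Finset (Fin m × Fin 3)) := by
      ext ⟨k, t⟩
      simp only [Finset.mem_filter, Finset.mem_univ, true_and,
        charR'l0 m hm a ha rk hrk R hR2 hR01 R' hR'lift hR'rest l hl k t,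
        Finset.mem_insert, Finset.mem_singleton, Prod.mk.injEq]
      rw [fin3_ne2 t, show (l = k + 1) ↔ (k = l - 1) from (fin_sub_iff l k).symm]
      simp [h0, eq_comm (a := l) (b := k)]
      tauto
    rw [if_neg h0]
    have hnc : (Finset.univ.filter fun i : Fin m × Fin 3 => ¬ R' i (a l) (a 0)).card = 6 := by
      rw [hneg,
        Finset.card_insert_of_notMem (by simp [Prod.ext_iff, Ne.symm hl]),
        Finset.card_insert_of_notMem (by simp [Prod.ext_iff, Ne.symm hl]),
        Finset.card_insert_of_notMem (by simp [Prod.ext_iff]),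
        Finset.card_insert_of_notMem (by simp [Prod.ext_iff]),
        Finset.card_insert_of_notMem (by simp [Prod.ext_iff, fin_self_ne_sub_one hm l]),
        Finset.card_singleton]
    omega

end Rcount


set_option maxHeartbeats 1000000 in
/-- In the 3m-voter profile of the paper (two voters rank each `a k` strictly last and are
otherwise indifferent; one voter ranks `a (k+1)` strictly below `a k`, which is strictly below
all others, and is otherwise indifferent), there is no Condorcet winner; but if the two voters
ranking `a 0` last lift `a 0` to the top, then `a 0` becomes the Condorcet winner. -/
theorem paper_profile_condorcet {U : Type*} (m : ℕ) [NeZero m] (hm : 3 ≤ m)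
    (a : Fin m → U) (ha : Function.Injective a)
    (A : Finset U) (hA : A = Finset.univ.image a)
    (rk : Fin m → U → ℕ)
    (hrk : ∀ k x, rk k x = if x = a (k + 1) then 2 else if x = a k then 1 else 0)
    (R : Fin m × Fin 3 → U → U → Prop)
    (hR2 : ∀ k : Fin m, R (k, 2) = fun x y => rk k x ≤ rk k y)
    (hR01 : ∀ (k : Fin m) (t : Fin 3), t ≠ 2 → R (k, t) = fun x y => ¬(x = a k ∧ y ≠ a k))
    (R' : Fin m × Fin 3 → U → U → Prop)
    (hR'lift : ∀ t : Fin 3, t ≠ 2 → R' (0, t) = fun x y => ¬(y = a 0 ∧ x ≠ a 0))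
    (hR'rest : ∀ v : Fin m × Fin 3, ¬(v.1 = 0 ∧ v.2 ≠ 2) → R' v = R v) :
    (∀ c : U, ¬ CondorcetWinner R A c) ∧ CondorcetWinner R' A (a 0) := by
  have hm9 : 9 ≤ 3 * m := by omega
  have h2ne : ((1 : Fin m) + 1) ≠ 0 := fin_two_ne_zero' m hm
  constructor
  · rintro c ⟨hcA, hwin⟩
    rw [hA] at hcA
    obtain ⟨j, -, rfl⟩ := Finset.mem_image.mp hcA
    have hjne : j ≠ j + 1 + 1 := by
      intro h
      rw [add_assoc] at h
      exact h2ne (left_eq_add.mp h)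
    have hne : a (j + 1 + 1) ≠ a j := fun h => hjne (ha h).symm
    have hmem : a (j + 1 + 1) ∈ A := by
      rw [hA]; exact Finset.mem_image_of_mem a (Finset.mem_univ _)
    have h1 := hwin (a (j + 1 + 1)) hmem hne
    rw [countR m hm a ha rk hrk R hR2 hR01 j (j + 1 + 1) hjne,
      countR m hm a ha rk hrk R hR2 hR01 (j + 1 + 1) j (Ne.symm hjne)] at h1
    have hx : ¬ (j + 1 + 1 = j + 1) :=
      fun h => fin_one_ne_zero' m hm (add_eq_left.mp h)
    rw [if_neg hx] at h1
    by_cases h3 : j = j + 1 + 1 + 1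
    · rw [if_pos h3] at h1; omega
    · rw [if_neg h3] at h1; omega
  · refine ⟨by rw [hA]; exact Finset.mem_image_of_mem a (Finset.mem_univ _), ?_⟩
    intro b hb hbne
    rw [hA] at hb
    obtain ⟨l, -, rfl⟩ := Finset.mem_image.mp hb
    have hl0 : l ≠ 0 := fun h => hbne (by rw [h])
    rw [countR'0l m hm a ha rk hrk R hR2 hR01 R' hR'lift hR'rest l hl0,
      countR'l0 m hm a ha rk hrk R hR2 hR01 R' hR'lift hR'rest l hl0]
    split_ifs <;> omega
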